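/- Let h : [1, M+a] → ℝ be convex, where M ≥ 3 is an integer and a ∈ [0,1]. Then the restriction of h to the integers {1,...,M} is discretely convex; moreover, if max_{x∈{1,...,M}} h(x) - min_{x∈{1,...,M}} h(x) ≤ (M/20)·ε for some ε > 0, then min over odd integers 2y-1 with y ∈ {1,...,⌈M/2⌉} of h(2y-1) minus the infimum of h over [1, M+a] is at most ε/2. -/

import Mathlib

lemma secant_aux {s : Set ℝ} {h : ℝ → ℝ} (hc : ConvexOn ℝ s h) (v : ℝ) {u w : ℝ}
    (hu : u ∈ s) (hw : w ∈ s) (h1 : u ≤ v) (h2 : v ≤ w) :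
    (w - u) * h v ≤ (w - v) * h u + (v - u) * h w := by
  rcases eq_or_lt_of_le (h1.trans h2) with heq | hlt
  · have hvu : v = u := le_antisymm (heq ▸ h2) h1
    subst hvu
    rw [← heq]
    ring_nf
    simp
  · have hd : 0 < w - u := by linarith
    have hcomb := hc.2 hu hw (show (0:ℝ) ≤ (w-v)/(w-u) from div_nonneg (by linarith) hd.le)
      (show (0:ℝ) ≤ (v-u)/(w-u) from div_nonneg (by linarith) hd.le)
      (by field_simp; ring)
    have hv : ((w-v)/(w-u)) • u + ((v-u)/(w-u)) • w = v := by
      simp only [smul_eq_mul]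
      field_simp
      ring
    rw [hv] at hcomb
    simp only [smul_eq_mul] at hcomb
    rw [div_mul_eq_mul_div, div_mul_eq_mul_div, ← add_div, le_div_iff₀ hd] at hcomb
    linarith

set_option maxHeartbeats 2000000 in
theorem stmt_4 (M : ℕ) (hM : 3 ≤ M) (a : ℝ) (ha0 : 0 ≤ a) (ha1 : a ≤ 1)
    (ε : ℝ) (hε : 0 < ε) (h : ℝ → ℝ)
    (hconv : ConvexOn ℝ (Set.Icc (1 : ℝ) ((M : ℝ) + a)) h)
    (hgap : ∀ x ∈ Finset.Icc 1 M, ∀ y ∈ Finset.Icc 1 M,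
      h (x : ℝ) - h (y : ℝ) ≤ (M : ℝ) / 20 * ε) :
    (∀ i : ℕ, 2 ≤ i → i ≤ M - 1 → 2 * h (i : ℝ) ≤ h ((i : ℝ) + 1) + h ((i : ℝ) - 1)) ∧
    (∃ y ∈ Finset.Icc 1 ((M + 1) / 2),
      h ((2 * y - 1 : ℕ) : ℝ) - sInf (h '' Set.Icc (1 : ℝ) ((M : ℝ) + a)) ≤ ε / 2) := by
  have hM3 : (3:ℝ) ≤ (M:ℝ) := by exact_mod_cast hM
  have h1mem : (1:ℝ) ∈ Set.Icc (1:ℝ) ((M:ℝ) + a) := ⟨le_rfl, by linarith⟩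
  have hmem : ∀ n : ℕ, 1 ≤ n → n ≤ M → (n:ℝ) ∈ Set.Icc (1:ℝ) ((M:ℝ) + a) := by
    intro n h1 h2
    constructor
    · exact_mod_cast h1
    · have : (n:ℝ) ≤ (M:ℝ) := by exact_mod_cast h2
      linarith
  constructor
  · -- discrete convexity
    intro i h2i hiM
    have hiM' : i + 1 ≤ M := by omega
    have h2R : (2:ℝ) ≤ (i:ℝ) := by exact_mod_cast h2i
    have hleR : (i:ℝ) + 1 ≤ (M:ℝ) := by exact_mod_cast hiM'
    have hlo : ((i:ℝ) - 1) ∈ Set.Icc (1:ℝ) ((M:ℝ) + a) := ⟨by linarith, by linarith⟩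
    have hhi : ((i:ℝ) + 1) ∈ Set.Icc (1:ℝ) ((M:ℝ) + a) := ⟨by linarith, by linarith⟩
    have hs := secant_aux hconv (i:ℝ) hlo hhi (by linarith) (by linarith)
    nlinarith [hs]
  · -- part 2
    obtain ⟨i, hiF, hminF⟩ := Finset.exists_min_image (Finset.Icc 1 M) (fun n => h (n:ℝ))
      ⟨1, Finset.mem_Icc.mpr ⟨le_refl 1, by omega⟩⟩
    rw [Finset.mem_Icc] at hiF
    obtain ⟨hi1, hiM⟩ := hiF
    set b := (M:ℝ)/20*ε with hbdef
    have hb0 : 0 ≤ b := by positivity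
    have hgap' : ∀ x y : ℕ, 1 ≤ x → x ≤ M → 1 ≤ y → y ≤ M → h (x:ℝ) - h (y:ℝ) ≤ b := by
      intro x y hx1 hx2 hy1 hy2
      exact hgap x (Finset.mem_Icc.mpr ⟨hx1, hx2⟩) y (Finset.mem_Icc.mpr ⟨hy1, hy2⟩)
    have hmin : ∀ n : ℕ, 1 ≤ n → n ≤ M → h (i:ℝ) ≤ h (n:ℝ) := by
      intro n h1 h2
      exact hminF n (Finset.mem_Icc.mpr ⟨h1, h2⟩)
    have hg1 : h (1:ℝ) - h (i:ℝ) ≤ b := by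
      have := hgap' 1 i le_rfl (by omega) hi1 hiM
      push_cast at this; exact this
    have hgM : h (M:ℝ) - h (i:ℝ) ≤ b := hgap' M i (by omega) le_rfl hi1 hiM
    have hiR1 : (1:ℝ) ≤ (i:ℝ) := by exact_mod_cast hi1
    have hiRM : (i:ℝ) ≤ (M:ℝ) := by exact_mod_cast hiM
    -- generic step: from c*d ≤ b, e ≤ 2c, 0 ≤ e conclude d*e ≤ 2b
    have step : ∀ c d e : ℝ, 0 ≤ c → 0 ≤ e → c * d ≤ b → e ≤ 2*c → d * e ≤ 2*b := by
      intro c d e hc he hcd hec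
      rcases le_or_gt d 0 with hd | hd
      · nlinarith
      · nlinarith [mul_le_mul_of_nonneg_left hec hd.le]
    -- Claim B : infimum drop bound
    have hB : ∀ x ∈ Set.Icc (1:ℝ) ((M:ℝ) + a), (h (i:ℝ) - h x) * ((M:ℝ) - 2) ≤ 2 * b := by
      intro x hx
      obtain ⟨hx1, hx2⟩ := hx
      by_cases hcase : (M:ℝ) ≤ x
      · -- u=1, v=M, w=x
        have hs := secant_aux hconv ((M:ℕ):ℝ) h1mem ⟨hx1, hx2⟩
          (by norm_num; linarith) hcase
        have hg : h (1:ℝ) - h (M:ℝ) ≤ b := by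
          have := hgap' 1 M le_rfl (by omega) (by omega) le_rfl
          push_cast at this; exact this
        have hm : h (i:ℝ) ≤ h (M:ℝ) := hmin M (by omega) le_rfl
        have key : ((M:ℝ) - 1) * (h (i:ℝ) - h x) ≤ b := by
          nlinarith [hs, hg, hm, hb0,
            mul_nonneg (show (0:ℝ) ≤ x - (M:ℝ) by linarith)
              (show (0:ℝ) ≤ b - (h (1:ℝ) - h (M:ℝ)) by linarith),
            mul_nonneg hb0 (show (0:ℝ) ≤ 1 - (x - (M:ℝ)) by linarith),
            mul_nonneg (show (0:ℝ) ≤ (M:ℝ) - 1 by linarith)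
              (show (0:ℝ) ≤ h (M:ℝ) - h (i:ℝ) by linarith)]
        exact step ((M:ℝ)-1) _ _ (by linarith) (by linarith) key (by linarith)
      · push_neg at hcase
        obtain ⟨j, hj1, hjx, hxj, hjM⟩ :
            ∃ j : ℕ, 1 ≤ j ∧ (j:ℝ) ≤ x ∧ x < (j:ℝ) + 1 ∧ j < M := by
          refine ⟨⌊x⌋₊, Nat.le_floor (by exact_mod_cast hx1), Nat.floor_le (by linarith),
            Nat.lt_floor_add_one x, ?_⟩
          have : ((⌊x⌋₊:ℕ):ℝ) < (M:ℝ) := lt_of_le_of_lt (Nat.floor_le (by linarith)) hcase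
          exact_mod_cast this
        have hjR1 : (1:ℝ) ≤ (j:ℝ) := by exact_mod_cast hj1
        by_cases h2j : M ≤ 2*j
        · -- u=1, v=j, w=x
          have h2jR : (M:ℝ) ≤ 2*(j:ℝ) := by exact_mod_cast h2j
          have hs := secant_aux hconv ((j:ℕ):ℝ) h1mem ⟨hx1, hx2⟩ hjR1 hjx
          have hg : h (1:ℝ) - h (j:ℝ) ≤ b := by
            have := hgap' 1 j le_rfl (by omega) hj1 (by omega)
            push_cast at this; exact this
          have hm : h (i:ℝ) ≤ h (j:ℝ) := hmin j hj1 (by omega)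
          have key : ((j:ℝ) - 1) * (h (i:ℝ) - h x) ≤ b := by
            nlinarith [hs, hg, hm, hb0,
              mul_nonneg (show (0:ℝ) ≤ x - (j:ℝ) by linarith)
                (show (0:ℝ) ≤ b - (h (1:ℝ) - h (j:ℝ)) by linarith),
              mul_nonneg hb0 (show (0:ℝ) ≤ 1 - (x - (j:ℝ)) by linarith),
              mul_nonneg (show (0:ℝ) ≤ (j:ℝ) - 1 by linarith)
                (show (0:ℝ) ≤ h (j:ℝ) - h (i:ℝ) by linarith)]
          exact step ((j:ℝ)-1) _ _ (by linarith) (by linarith) key (by linarith)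
        · -- u=x, v=j+1, w=M
          push_neg at h2j
          have h2jR : 2*(j:ℝ) + 1 ≤ (M:ℝ) := by exact_mod_cast h2j
          have hjMR : (j:ℝ) + 1 ≤ (M:ℝ) := by exact_mod_cast hjM
          have hs := secant_aux hconv ((j:ℝ)+1) ⟨hx1, hx2⟩ (hmem M (by omega) le_rfl)
            hxj.le hjMR
          have hg : h (M:ℝ) - h ((j:ℝ)+1) ≤ b := by
            have := hgap' M (j+1) (by omega) le_rfl (by omega) (by omega)
            push_cast at this; exact this
          have hm : h (i:ℝ) ≤ h ((j:ℝ)+1) := by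
            have := hmin (j+1) (by omega) (by omega)
            push_cast at this; exact this
          have key : ((M:ℝ) - (j:ℝ) - 1) * (h (i:ℝ) - h x) ≤ b := by
            nlinarith [hs, hg, hm, hb0,
              mul_nonneg (show (0:ℝ) ≤ (j:ℝ)+1-x by linarith)
                (show (0:ℝ) ≤ b - (h (M:ℝ) - h ((j:ℝ)+1)) by linarith),
              mul_nonneg hb0 (show (0:ℝ) ≤ 1 - ((j:ℝ)+1-x) by linarith),
              mul_nonneg (show (0:ℝ) ≤ (M:ℝ)-(j:ℝ)-1 by linarith)
                (show (0:ℝ) ≤ h ((j:ℝ)+1) - h (i:ℝ) by linarith)]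
          exact step ((M:ℝ)-(j:ℝ)-1) _ _ (by linarith) (by linarith) key (by linarith)
    -- Claim A : good odd point
    have hA : ∃ p : ℕ, p % 2 = 1 ∧ 1 ≤ p ∧ p ≤ M ∧
        (h (p:ℝ) - h (i:ℝ)) * ((M:ℝ) - 1) ≤ 2 * b := by
      rcases Nat.even_or_odd i with he | ho
      · have hi2 : 2 ≤ i := by
          rcases he with ⟨k, hk⟩; omega
        have hi2R : (2:ℝ) ≤ (i:ℝ) := by exact_mod_cast hi2
        by_cases hpos : 2*i ≤ M + 1
        · refine ⟨i+1, by rcases he with ⟨k,hk⟩; omega, by omega, by omega, ?_⟩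
          have hi1M : i + 1 ≤ M := by omega
          have hi1MR : (i:ℝ) + 1 ≤ (M:ℝ) := by exact_mod_cast hi1M
          have hs := secant_aux hconv ((i:ℝ)+1) (hmem i hi1 hiM) (hmem M (by omega) le_rfl)
            (by linarith) hi1MR
          have hposR : 2*(i:ℝ) ≤ (M:ℝ) + 1 := by exact_mod_cast hpos
          have key : ((M:ℝ) - (i:ℝ)) * (h ((i:ℝ)+1) - h (i:ℝ)) ≤ b := by
            nlinarith [hs, hgM, hmin i hi1 hiM]
          have hfin := step ((M:ℝ)-(i:ℝ)) (h ((i:ℝ)+1) - h (i:ℝ)) ((M:ℝ)-1)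
            (by linarith) (by linarith) key (by linarith)
          push_cast
          linarith [hfin]
        · push_neg at hpos
          refine ⟨i-1, by rcases he with ⟨k,hk⟩; omega, by omega, by omega, ?_⟩
          have hcast : ((i-1 : ℕ):ℝ) = (i:ℝ) - 1 := by
            push_cast [Nat.cast_sub hi1]; ring
          have hs := secant_aux hconv ((i:ℝ)-1) h1mem (hmem i hi1 hiM)
            (by linarith) (by linarith)
          have hposR : (M:ℝ) + 2 ≤ 2*(i:ℝ) := by exact_mod_cast hpos
          have key : ((i:ℝ) - 1) * (h ((i:ℝ)-1) - h (i:ℝ)) ≤ b := by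
            nlinarith [hs, hg1]
          have hfin := step ((i:ℝ)-1) (h ((i:ℝ)-1) - h (i:ℝ)) ((M:ℝ)-1)
            (by linarith) (by linarith) key (by linarith)
          rw [hcast]
          linarith [hfin]
      · exact ⟨i, Nat.odd_iff.mp ho, hi1, hiM, by nlinarith [hb0]⟩
    obtain ⟨p, hp2, hp1, hpM, hpb⟩ := hA
    refine ⟨(p+1)/2, Finset.mem_Icc.mpr ⟨by omega, by omega⟩, ?_⟩
    have hpy : 2 * ((p+1)/2) - 1 = p := by omega
    rw [hpy]
    have hne : (h '' Set.Icc (1:ℝ) ((M:ℝ) + a)).Nonempty :=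
      ⟨h 1, 1, h1mem, rfl⟩
    have hlb : h (p:ℝ) - ε/2 ≤ sInf (h '' Set.Icc (1:ℝ) ((M:ℝ) + a)) := by
      apply le_csInf hne
      rintro z ⟨x, hxI, rfl⟩
      have hBx := hB x hxI
      have hpoly : (0:ℝ) ≤ 3*(M:ℝ)^2 - 12*(M:ℝ) + 10 := by nlinarith [hM3]
      nlinarith [hBx, hpb, hε.le, hpoly, mul_nonneg hε.le (sub_nonneg.mpr hM3),
        mul_le_mul_of_nonneg_right hpb (show (0:ℝ) ≤ (M:ℝ)-2 by linarith),
        mul_le_mul_of_nonneg_right hBx (show (0:ℝ) ≤ (M:ℝ)-1 by linarith),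
        mul_nonneg hε.le hpoly]
    linarith
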